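/- For every m ∈ ℕ there exists a constant δ = δ(m) > 0 such that every finite graph G = (V, E) without the m-order property contains either a clique or an anticlique of size at least |V|^δ. -/

import Mathlib

def Bfn : ℕ → ℕ → ℕ → ℕ
  | 0, _, _ => 0
  | _+1, 0, _ => 0
  | _+1, _+1, 0 => 0
  | p+1, q+1, γ+1 =>
      1 + Bfn p (q+1) (if Even (γ+1) then γ else γ+1)
        + Bfn (p+1) q (if Even (γ+1) then γ+1 else γ)
  termination_by p q _ => (p, q)

lemma cons_lt_cases {α : Type} {k : ℕ} (P : ℕ → α → α → Prop) (c : α) (f : Fin k → α)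
    (h0 : ∀ j : Fin k, P 0 c (f j))
    (hs : ∀ i j : Fin k, i < j → P ((i:ℕ)+1) (f i) (f j)) :
    ∀ i j : Fin (k+1), i < j → P (i:ℕ) ((Fin.cons c f : Fin (k+1) → α) i) ((Fin.cons c f : Fin (k+1) → α) j) := by
  intro i
  refine Fin.cases (motive := fun i => ∀ j : Fin (k+1), i < j →
    P (i:ℕ) ((Fin.cons c f : Fin (k+1) → α) i) ((Fin.cons c f : Fin (k+1) → α) j)) ?_ ?_ i
  · intro j hj
    refine Fin.cases (motive := fun j => (0:Fin (k+1)) < j →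
      P ((0:Fin (k+1)):ℕ) ((Fin.cons c f : Fin (k+1) → α) 0) ((Fin.cons c f : Fin (k+1) → α) j)) ?_ ?_ j hj
    · intro h; exact absurd h (lt_irrefl _)
    · intro j' _
      simp only [Fin.cons_zero, Fin.cons_succ, Fin.val_zero]
      exact h0 j'
  · intro i' j hj
    refine Fin.cases (motive := fun j => i'.succ < j →
      P ((i'.succ : Fin (k+1)):ℕ) ((Fin.cons c f : Fin (k+1) → α) i'.succ) ((Fin.cons c f : Fin (k+1) → α) j)) ?_ ?_ j hj
    · intro h; exact absurd h (by simp [Fin.lt_def])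
    · intro j' hj'
      simp only [Fin.cons_succ, Fin.val_succ]
      exact hs i' j' (Fin.succ_lt_succ_iff.mp hj')

lemma cons_mem {α : Type} {k : ℕ} (A : Finset α) (c : α) (f : Fin k → α)
    (hc : c ∈ A) (hf : ∀ i, f i ∈ A) : ∀ i : Fin (k+1), (Fin.cons c f : Fin (k+1) → α) i ∈ A := by
  intro i
  refine Fin.cases ?_ ?_ i
  · simpa using hc
  · intro i'; simpa using hf i'

lemma core {V : Type} (G : SimpleGraph V) :
    ∀ (n p q γ : ℕ) (A : Finset V), p + q ≤ n → Bfn p q γ < A.card →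
    (∃ f : Fin p → V, (∀ i, f i ∈ A) ∧ ∀ i j : Fin p, i < j → G.Adj (f i) (f j)) ∨
    (∃ f : Fin q → V, (∀ i, f i ∈ A) ∧ ∀ i j : Fin q, i < j → ¬ G.Adj (f i) (f j) ∧ f i ≠ f j) ∨
    (∃ e : Fin γ → V, (∀ i, e i ∈ A) ∧
      ∀ i j : Fin γ, i < j → (G.Adj (e i) (e j) ↔ Even (γ - (i:ℕ)))) := by
  classical
  intro n
  induction n with
  | zero =>
      intro p q γ A hpq _
      obtain ⟨rfl, rfl⟩ : p = 0 ∧ q = 0 := by omega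
      exact Or.inl ⟨fun i => i.elim0, fun i => i.elim0, fun i => i.elim0⟩
  | succ n ih =>
      intro p q γ A hpq hB
      match p, q, γ with
      | 0, q, γ => exact Or.inl ⟨fun i => i.elim0, fun i => i.elim0, fun i => i.elim0⟩
      | p+1, 0, γ => exact Or.inr (Or.inl ⟨fun i => i.elim0, fun i => i.elim0, fun i => i.elim0⟩)
      | p+1, q+1, 0 =>
          exact Or.inr (Or.inr ⟨fun i => i.elim0, fun i => i.elim0, fun i => i.elim0⟩)
      | p+1, q+1, γ+1 =>
          have hBeq : Bfn (p+1) (q+1) (γ+1) = 1 + Bfn p (q+1) (if Even (γ+1) then γ else γ+1)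
              + Bfn (p+1) q (if Even (γ+1) then γ+1 else γ) := by simp [Bfn]
          have hApos : 0 < A.card := lt_of_le_of_lt (Nat.zero_le _) hB
          obtain ⟨c, hc⟩ := Finset.card_pos.mp hApos
          set A1 := (A.erase c).filter (fun x => G.Adj c x) with hA1def
          set A0 := (A.erase c).filter (fun x => ¬ G.Adj c x) with hA0def
          have hsplit : A1.card + A0.card = A.card - 1 := by
            rw [hA1def, hA0def, Finset.card_filter_add_card_filter_not,
              Finset.card_erase_of_mem hc]
          have hA1sub : A1 ⊆ A := (Finset.filter_subset _ _).trans (Finset.erase_subset _ _)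
          have hA0sub : A0 ⊆ A := (Finset.filter_subset _ _).trans (Finset.erase_subset _ _)
          have hA1adj : ∀ x ∈ A1, G.Adj c x := fun x hx => (Finset.mem_filter.mp hx).2
          have hA0adj : ∀ x ∈ A0, ¬ G.Adj c x ∧ x ≠ c := by
            intro x hx
            exact ⟨(Finset.mem_filter.mp hx).2,
              Finset.ne_of_mem_erase (Finset.mem_filter.mp hx).1⟩
          have hchoice : Bfn p (q+1) (if Even (γ+1) then γ else γ+1) < A1.card ∨
              Bfn (p+1) q (if Even (γ+1) then γ+1 else γ) < A0.card := by
            by_contra hcon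
            push_neg at hcon
            omega
          rcases hchoice with h1 | h0
          · -- recurse into neighbourhood side
            by_cases hev : Even (γ+1)
            · rw [if_pos hev] at h1
              rcases ih p (q+1) γ A1 (by omega) h1 with ⟨f, hfA, hf⟩ | ⟨f, hfA, hf⟩ | ⟨e, heA, he⟩
              · refine Or.inl ⟨Fin.cons c f, cons_mem A c f hc (fun i => hA1sub (hfA i)), ?_⟩
                exact cons_lt_cases (fun _ x y => G.Adj x y) c f
                  (fun j => hA1adj _ (hfA j)) (fun i j hij => hf i j hij)
              · exact Or.inr (Or.inl ⟨f, fun i => hA1sub (hfA i), hf⟩)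
              · refine Or.inr (Or.inr ⟨Fin.cons c e, cons_mem A c e hc (fun i => hA1sub (heA i)), ?_⟩)
                refine cons_lt_cases (fun t x y => G.Adj x y ↔ Even ((γ+1) - t)) c e ?_ ?_
                · intro j
                  exact iff_of_true (hA1adj _ (heA j)) (by simpa using hev)
                · intro i j hij
                  simpa [Nat.succ_sub_succ] using he i j hij
            · rw [if_neg hev] at h1
              rcases ih p (q+1) (γ+1) A1 (by omega) h1 with ⟨f, hfA, hf⟩ | ⟨f, hfA, hf⟩ | ⟨e, heA, he⟩
              · refine Or.inl ⟨Fin.cons c f, cons_mem A c f hc (fun i => hA1sub (hfA i)), ?_⟩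
                exact cons_lt_cases (fun _ x y => G.Adj x y) c f
                  (fun j => hA1adj _ (hfA j)) (fun i j hij => hf i j hij)
              · exact Or.inr (Or.inl ⟨f, fun i => hA1sub (hfA i), hf⟩)
              · exact Or.inr (Or.inr ⟨e, fun i => hA1sub (heA i), he⟩)
          · -- recurse into non-neighbourhood side
            by_cases hev : Even (γ+1)
            · rw [if_pos hev] at h0
              rcases ih (p+1) q (γ+1) A0 (by omega) h0 with ⟨f, hfA, hf⟩ | ⟨f, hfA, hf⟩ | ⟨e, heA, he⟩
              · exact Or.inl ⟨f, fun i => hA0sub (hfA i), hf⟩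
              · refine Or.inr (Or.inl ⟨Fin.cons c f, cons_mem A c f hc (fun i => hA0sub (hfA i)), ?_⟩)
                refine cons_lt_cases (fun _ x y => ¬ G.Adj x y ∧ x ≠ y) c f ?_ ?_
                · intro j
                  exact ⟨(hA0adj _ (hfA j)).1, fun hEq => (hA0adj _ (hfA j)).2 hEq.symm⟩
                · intro i j hij; exact hf i j hij
              · exact Or.inr (Or.inr ⟨e, fun i => hA0sub (heA i), he⟩)
            · rw [if_neg hev] at h0
              rcases ih (p+1) q γ A0 (by omega) h0 with ⟨f, hfA, hf⟩ | ⟨f, hfA, hf⟩ | ⟨e, heA, he⟩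
              · exact Or.inl ⟨f, fun i => hA0sub (hfA i), hf⟩
              · refine Or.inr (Or.inl ⟨Fin.cons c f, cons_mem A c f hc (fun i => hA0sub (hfA i)), ?_⟩)
                refine cons_lt_cases (fun _ x y => ¬ G.Adj x y ∧ x ≠ y) c f ?_ ?_
                · intro j
                  exact ⟨(hA0adj _ (hfA j)).1, fun hEq => (hA0adj _ (hfA j)).2 hEq.symm⟩
                · intro i j hij; exact hf i j hij
              · refine Or.inr (Or.inr ⟨Fin.cons c e, cons_mem A c e hc (fun i => hA0sub (heA i)), ?_⟩)
                refine cons_lt_cases (fun t x y => G.Adj x y ↔ Even ((γ+1) - t)) c e ?_ ?_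
                · intro j
                  exact iff_of_false (hA0adj _ (heA j)).1 (by simpa using hev)
                · intro i j hij
                  simpa [Nat.succ_sub_succ] using he i j hij
lemma pow_helper (x γ : ℕ) : x ^ γ + x ^ (γ+1) ≤ (x+1) ^ (γ+1) := by
  induction γ with
  | zero => simp [pow_succ]; omega
  | succ γ ih =>
      have h1 : (x+1) ^ (γ+2) = (x+1) * (x+1) ^ (γ+1) := by ring
      have h2 : (x+1) * (x ^ γ + x ^ (γ+1)) ≤ (x+1) * (x+1) ^ (γ+1) :=
        Nat.mul_le_mul_left _ ih
      have h3 : (x+1) * (x ^ γ + x ^ (γ+1)) = x ^ (γ+1) + x ^ (γ+2) + (x ^ γ + x ^ (γ+1)) := by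
        ring
      simp only [show γ+1+1 = γ+2 from rfl] at *
      omega

lemma bfn_bound : ∀ n p q γ, p + q ≤ n → Bfn p q γ + 1 ≤ (p + q + 1) ^ γ := by
  intro n
  induction n with
  | zero =>
      intro p q γ h
      obtain ⟨rfl, rfl⟩ : p = 0 ∧ q = 0 := by omega
      simpa [Bfn] using Nat.one_le_pow γ 1 (by omega)
  | succ n ih =>
      intro p q γ h
      match p, q, γ with
      | 0, q, γ => simp [Bfn]; exact Nat.one_le_pow _ _ (by omega)
      | p+1, 0, γ => simp [Bfn]; exact Nat.one_le_pow _ _ (by omega)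
      | p+1, q+1, 0 => simp [Bfn]
      | p+1, q+1, γ+1 =>
          have hB : Bfn (p+1) (q+1) (γ+1) = 1 + Bfn p (q+1) (if Even (γ+1) then γ else γ+1)
              + Bfn (p+1) q (if Even (γ+1) then γ+1 else γ) := by simp [Bfn]
          have hx := pow_helper (p + q + 2) γ
          have hxx : (p + q + 2) ^ γ + (p + q + 2) ^ (γ+1) ≤ (p + (q+1) + 1+1) ^ (γ+1) := by
            have : p + (q+1) + 1 + 1 = p + q + 2 + 1 := by omega
            rw [this]; exact hx
          rw [hB]
          by_cases hev : Even (γ+1) <;> simp only [hev, if_true, if_false, reduceIte]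
          · have e1 := ih p (q+1) γ (by omega)
            have e2 := ih (p+1) q (γ+1) (by omega)
            have h1 : p + (q+1) + 1 = p + q + 2 := by omega
            have h2 : (p+1) + q + 1 = p + q + 2 := by omega
            rw [h1] at e1; rw [h2] at e2
            have h3 : (p+1) + (q+1) + 1 = p + (q+1) + 1 + 1 := by omega
            rw [h3]
            omega
          · have e1 := ih p (q+1) (γ+1) (by omega)
            have e2 := ih (p+1) q γ (by omega)
            have h1 : p + (q+1) + 1 = p + q + 2 := by omega
            have h2 : (p+1) + q + 1 = p + q + 2 := by omega
            rw [h1] at e1; rw [h2] at e2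
            have h3 : (p+1) + (q+1) + 1 = p + (q+1) + 1 + 1 := by omega
            rw [h3]
            omega



/-- **Erdős–Hajnal for stable graphs.**
For every `m ∈ ℕ` there is a constant `δ = δ(m) > 0` such that every finite graph
`G = (V, E)` without the `m`-order property contains either a clique or an
anticlique of size at least `|V| ^ δ`. -/
theorem erdos_hajnal_stable (m : ℕ) :
    ∃ δ : ℝ, 0 < δ ∧
      ∀ (V : Type) [Fintype V] (G : SimpleGraph V),
        (¬ ∃ a b : Fin m → V, ∀ i j, G.Adj (a i) (b j) ↔ i ≤ j) →
        ∃ A : Set V,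
          ((A.Pairwise fun x y => G.Adj x y) ∨ (A.Pairwise fun x y => ¬ G.Adj x y)) ∧
          (Fintype.card V : ℝ) ^ δ ≤ (A.ncard : ℝ) := by

  classical
  have hδpos : (0:ℝ) < 1 / (16 * (m+1) : ℝ) := by positivity
  refine ⟨1 / (16 * (m+1) : ℝ), hδpos, ?_⟩
  set δ : ℝ := 1 / (16 * (m+1) : ℝ) with hδdef
  intro V _ G hstab
  -- the alternating-chain pattern yields the order property
  have hQ : ∀ (e : Fin (2*m) → V),
      (∀ i j : Fin (2*m), i < j → (G.Adj (e i) (e j) ↔ Even (2*m - (i:ℕ)))) → False := by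
    intro e he
    apply hstab
    refine ⟨fun i => e ⟨2*(i:ℕ), by omega⟩, fun j => e ⟨2*(j:ℕ)+1, by omega⟩, ?_⟩
    intro i j
    rcases le_or_gt i j with hij | hij
    · have hij' : (i:ℕ) ≤ (j:ℕ) := hij
      have h2 : (⟨2*(i:ℕ), by omega⟩ : Fin (2*m)) < ⟨2*(j:ℕ)+1, by omega⟩ := by
        simp only [Fin.lt_def]; omega
      rw [he _ _ h2]
      have hi : (i:ℕ) < m := i.isLt
      have hval : ((⟨2*(i:ℕ), by omega⟩ : Fin (2*m)) : ℕ) = 2*(i:ℕ) := rfl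
      rw [hval]
      exact iff_of_true ⟨m - (i:ℕ), by omega⟩ hij
    · have hij' : (j:ℕ) < (i:ℕ) := hij
      have h2 : (⟨2*(j:ℕ)+1, by omega⟩ : Fin (2*m)) < ⟨2*(i:ℕ), by omega⟩ := by
        simp only [Fin.lt_def]; omega
      have hiff := he _ _ h2
      have hval : ((⟨2*(j:ℕ)+1, by omega⟩ : Fin (2*m)) : ℕ) = 2*(j:ℕ)+1 := rfl
      rw [hval] at hiff
      have hodd : ¬ Even (2*m - (2*(j:ℕ)+1)) := by
        have hj : (j:ℕ) < m := j.isLt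
        rintro ⟨r, hr⟩; omega
      refine iff_of_false (fun h => hodd (hiff.mp h.symm)) (fun h => absurd hij (not_lt.mpr h))
  -- m = 0 is trivial
  rcases Nat.eq_zero_or_pos m with rfl | hm
  · exact absurd (hQ (fun i => (Fin.elim0 (by simpa using i)))
      (fun i j h => Fin.elim0 (by simpa using i))) id
  set n := Fintype.card V with hn
  rcases Nat.lt_or_ge n 1 with hn0 | hn1
  · -- n = 0
    refine ⟨∅, Or.inl (Set.pairwise_empty _), ?_⟩
    have h0 : n = 0 := by omega
    rw [h0]
    simp only [Set.ncard_empty, Nat.cast_zero]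
    rw [Real.zero_rpow (ne_of_gt hδpos)]
  rcases Nat.lt_or_ge n 2 with hn2 | hn2
  · -- n = 1
    have hcard1 : Fintype.card V = 1 := by omega
    refine ⟨Set.univ, Or.inr ?_, ?_⟩
    · intro x _ y _ hxy
      exact absurd (Fintype.card_le_one_iff.mp (le_of_eq hcard1) x y) hxy
    · have : (Set.univ : Set V).ncard = 1 := by
        rw [Set.ncard_univ, Nat.card_eq_fintype_card, hcard1]
      have hne : n = 1 := by omega
      rw [this, hne]
      simp [Real.one_rpow]
  -- auxiliary: 5^(1/4) ≤ 2 style estimates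
  have h54 : (5:ℝ) ^ ((1:ℝ)/4) ≤ 2 := by
    have hpow : ((5:ℝ) ^ ((1:ℝ)/4)) ^ (4:ℕ) = 5 := by
      rw [← Real.rpow_natCast ((5:ℝ) ^ ((1:ℝ)/4)) 4, ← Real.rpow_mul (by norm_num)]
      norm_num
    by_contra hcon
    push_neg at hcon
    have := pow_lt_pow_left₀ hcon (by norm_num : (0:ℝ) ≤ 2) (by norm_num : 4 ≠ 0)
    rw [hpow] at this
    norm_num at this
  rcases Nat.lt_or_ge (5 ^ (4*m)) n with hbig | hsmall
  · -- main case: n > 5^(4m)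
    obtain ⟨t, ht1, htP, htmax⟩ : ∃ t : ℕ, 1 ≤ t ∧ (2*t+1) ^ (2*m) ≤ n ∧
        n < (2*(t+1)+1) ^ (2*m) := by
      have hP1 : (2*1+1) ^ (2*m) ≤ n := by
        calc (2*1+1:ℕ) ^ (2*m) ≤ 5 ^ (2*m) := Nat.pow_le_pow_left (by norm_num) _
          _ ≤ 5 ^ (4*m) := Nat.pow_le_pow_right (by norm_num) (by omega)
          _ ≤ n := le_of_lt hbig
      obtain ⟨T, hTdef⟩ : ∃ T, T = Nat.findGreatest (fun t => (2*t+1) ^ (2*m) ≤ n) n :=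
        ⟨_, rfl⟩
      have h1 : 1 ≤ T := by
        rw [hTdef]; exact Nat.le_findGreatest (by omega) hP1
      have hTP : (2*T+1) ^ (2*m) ≤ n := by
        rw [hTdef]
        exact Nat.findGreatest_spec (P := fun t => (2*t+1) ^ (2*m) ≤ n) (m := 1) (n := n)
          (by omega) hP1
      have hTn : T < n := by
        by_contra hcon
        push_neg at hcon
        have ht : T ≤ n := by
          rw [hTdef]; exact Nat.findGreatest_le n
        have hge : 2*T+1 ≤ (2*T+1) ^ (2*m) := Nat.le_self_pow (by omega) _
        omega
      have hmax : ¬ ((2*(T+1)+1) ^ (2*m) ≤ n) := by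
        refine Nat.findGreatest_is_greatest (P := fun t => (2*t+1) ^ (2*m) ≤ n)
          (n := n) (k := T+1) ?_ ?_
        · rw [← hTdef]; omega
        · omega
      exact ⟨T, h1, hTP, by omega⟩
    -- apply core
    have hBlt : Bfn t t (2*m) < (Finset.univ : Finset V).card := by
      have hb := bfn_bound (t+t) t t (2*m) le_rfl
      have : t + t + 1 = 2*t+1 := by omega
      rw [this] at hb
      rw [Finset.card_univ, ← hn]
      omega
    have hreal : (n:ℝ) ^ δ ≤ (t:ℝ) := by
      have hc1 : (1:ℝ) ≤ (n:ℝ) := by exact_mod_cast hn1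
      have hmR : (1:ℝ) ≤ (m:ℝ) := by exact_mod_cast hm
      set α : ℝ := (1:ℝ)/(2*m) with hα
      set β : ℝ := (1:ℝ)/(4*m) with hβ
      have h4m : (0:ℝ) < 4*m := by nlinarith
      have h2m : (0:ℝ) < 2*m := by nlinarith
      -- 5 ≤ n^β
      have hc5 : ((5:ℝ) ^ ((4*m : ℕ)) : ℝ) ≤ (n:ℝ) := by
        exact_mod_cast le_of_lt hbig
      have s1 : (5:ℝ) ≤ (n:ℝ) ^ β := by
        have h1 : ((5:ℝ) ^ ((4*m:ℕ))) ^ β ≤ (n:ℝ) ^ β :=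
          Real.rpow_le_rpow (by positivity) hc5 (by positivity)
        have h2 : ((5:ℝ) ^ ((4*m:ℕ))) ^ β = 5 := by
          rw [← Real.rpow_natCast (5:ℝ) (4*m), ← Real.rpow_mul (by norm_num)]
          have : ((4*m : ℕ) : ℝ) * β = 1 := by
            rw [hβ]; push_cast; field_simp
          rw [this, Real.rpow_one]
        rw [← h2]; exact h1
      -- n^δ * 5 ≤ n^α
      have hδβα : δ + β ≤ α := by
        rw [hδdef, hα, hβ]
        rw [div_add_div _ _ (by nlinarith) (by nlinarith), div_le_div_iff₀ (by nlinarith) (by nlinarith)]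
        ring_nf
        nlinarith
      have s2 : (n:ℝ) ^ δ * 5 ≤ (n:ℝ) ^ α := by
        calc (n:ℝ) ^ δ * 5 ≤ (n:ℝ) ^ δ * (n:ℝ) ^ β := by
              have : (0:ℝ) ≤ (n:ℝ) ^ δ := by positivity
              nlinarith
          _ = (n:ℝ) ^ (δ + β) := (Real.rpow_add (by linarith) _ _).symm
          _ ≤ (n:ℝ) ^ α := Real.rpow_le_rpow_of_exponent_le hc1 hδβα
      -- n^α ≤ 5t
      have s3 : (n:ℝ) ^ α ≤ 5 * t := by
        have h5t : (2*(t+1)+1) ≤ 5*t := by omega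
        have hnat : n < (5*t) ^ (2*m) := lt_of_lt_of_le htmax (Nat.pow_le_pow_left h5t _)
        have hcast : (n:ℝ) ≤ (((5*t : ℕ):ℝ)) ^ ((2*m:ℕ)) := by
          exact_mod_cast le_of_lt hnat
        have h1 : (n:ℝ) ^ α ≤ ((((5*t:ℕ)):ℝ) ^ ((2*m:ℕ))) ^ α :=
          Real.rpow_le_rpow (by positivity) hcast (by positivity)
        have h2 : ((((5*t:ℕ)):ℝ) ^ ((2*m:ℕ))) ^ α = ((5*t:ℕ):ℝ) := by
          rw [← Real.rpow_natCast ((5*t:ℕ):ℝ) (2*m), ← Real.rpow_mul (by positivity)]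
          have : ((2*m : ℕ) : ℝ) * α = 1 := by
            rw [hα]; push_cast; field_simp
          rw [this, Real.rpow_one]
        rw [h2] at h1
        calc (n:ℝ) ^ α ≤ ((5*t:ℕ):ℝ) := h1
          _ = 5 * t := by push_cast; ring
      linarith
    rcases core G (t+t) t t (2*m) Finset.univ le_rfl hBlt with
      ⟨f, _, hf⟩ | ⟨f, _, hf⟩ | ⟨e, _, he⟩
    · -- clique
      have hinj : Function.Injective f := by
        intro i j hEq
        by_contra hne
        rcases lt_or_gt_of_ne hne with h | h
        · exact (G.ne_of_adj (hf i j h)) hEq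
        · exact (G.ne_of_adj (hf j i h)) hEq.symm
      refine ⟨Set.range f, Or.inl ?_, ?_⟩
      · rintro x ⟨i, rfl⟩ y ⟨j, rfl⟩ hxy
        have hne : i ≠ j := fun h => hxy (by rw [h])
        rcases lt_or_gt_of_ne hne with h | h
        · exact hf i j h
        · exact (hf j i h).symm
      · have hcard : (Set.range f).ncard = t := by
          rw [← Nat.card_coe_set_eq, Nat.card_range_of_injective hinj,
            Nat.card_eq_fintype_card, Fintype.card_fin]
        rw [hcard]
        exact hreal
    · -- anticlique
      have hinj : Function.Injective f := by
        intro i j hEq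
        by_contra hne
        rcases lt_or_gt_of_ne hne with h | h
        · exact (hf i j h).2 hEq
        · exact (hf j i h).2 hEq.symm
      refine ⟨Set.range f, Or.inr ?_, ?_⟩
      · rintro x ⟨i, rfl⟩ y ⟨j, rfl⟩ hxy
        have hne : i ≠ j := fun h => hxy (by rw [h])
        rcases lt_or_gt_of_ne hne with h | h
        · exact (hf i j h).1
        · exact fun hadj => (hf j i h).1 hadj.symm
      · have hcard : (Set.range f).ncard = t := by
          rw [← Nat.card_coe_set_eq, Nat.card_range_of_injective hinj,
            Nat.card_eq_fintype_card, Fintype.card_fin]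
        rw [hcard]
        exact hreal
    · exact absurd (hQ e he) id
  · -- middle case: 2 ≤ n ≤ 5^(4m)
    obtain ⟨x, y, hxy⟩ := Fintype.exists_pair_of_one_lt_card (α := V) (by omega)
    have hbound : (n:ℝ) ^ δ ≤ 2 := by
      have hc0 : (0:ℝ) ≤ (n:ℝ) := by positivity
      have hcast : (n:ℝ) ≤ ((5:ℝ) ^ ((4*m:ℕ))) := by exact_mod_cast hsmall
      have h1 : (n:ℝ) ^ δ ≤ ((5:ℝ) ^ ((4*m:ℕ))) ^ δ :=
        Real.rpow_le_rpow hc0 hcast (le_of_lt hδpos)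
      have h2 : ((5:ℝ) ^ ((4*m:ℕ))) ^ δ = (5:ℝ) ^ (((4*m:ℕ):ℝ) * δ) := by
        rw [← Real.rpow_natCast (5:ℝ) (4*m), ← Real.rpow_mul (by norm_num)]
      have h3 : ((4*m:ℕ):ℝ) * δ ≤ 1/4 := by
        rw [hδdef]
        push_cast
        rw [mul_one_div, div_le_div_iff₀ (by positivity) (by norm_num : (0:ℝ) < 4)]
        nlinarith [Nat.cast_nonneg (α := ℝ) m]
      have h4 : (5:ℝ) ^ (((4*m:ℕ):ℝ) * δ) ≤ (5:ℝ) ^ ((1:ℝ)/4) :=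
        Real.rpow_le_rpow_of_exponent_le (by norm_num) h3
      calc (n:ℝ) ^ δ ≤ ((5:ℝ) ^ ((4*m:ℕ))) ^ δ := h1
        _ = (5:ℝ) ^ (((4*m:ℕ):ℝ) * δ) := h2
        _ ≤ (5:ℝ) ^ ((1:ℝ)/4) := h4
        _ ≤ 2 := h54
    by_cases hadj : G.Adj x y
    · refine ⟨{x, y}, Or.inl ?_, ?_⟩
      · haveI : Std.Symm (fun x y => G.Adj x y) := ⟨fun a b (h : G.Adj a b) => h.symm⟩
        rw [Set.pairwise_pair_of_symm]
        intro _; exact hadj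
      · rw [Set.ncard_pair hxy]
        exact_mod_cast hbound
    · refine ⟨{x, y}, Or.inr ?_, ?_⟩
      · haveI : Std.Symm (fun x y => ¬ G.Adj x y) := ⟨fun a b (h : ¬ G.Adj a b) (hh : G.Adj b a) => h hh.symm⟩
        rw [Set.pairwise_pair_of_symm]
        intro _; exact hadj
      · rw [Set.ncard_pair hxy]
        exact_mod_cast hbound
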